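/- If I is a monomial ideal generated in a single degree d that is stable (respectively strongly stable), and f is the largest minimal generator of I in the co-lexicographic order, then the ideal generated by the remaining minimal generators G(I) \ {f} is again stable (respectively strongly stable). -/

import Mathlib

open MvPolynomial Finsupp

/-- The monomial ideal generated by the monomials with exponent vectors in `S`. -/
noncomputable def monomialIdeal (K : Type*) [Field K] {n : ℕ} (S : Finset (Fin n →₀ ℕ)) :
    Ideal (MvPolynomial (Fin n) K) :=
  Ideal.span ((fun s => (monomial s (1 : K))) '' S)

/-- `I` is a stable monomial ideal: for every monomial `m ∈ I` and every `i < max(m)`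
(where `j = max(m)` is the largest index with a nonzero exponent), `m·x_i/x_j ∈ I`. -/
def IsStable {K : Type*} [Field K] {n : ℕ} (I : Ideal (MvPolynomial (Fin n) K)) : Prop :=
  ∀ (s : Fin n →₀ ℕ) (i j : Fin n), monomial s (1 : K) ∈ I →
    s j ≠ 0 → (∀ k, j < k → s k = 0) → i < j →
    monomial (s + single i 1 - single j 1) (1 : K) ∈ I

/-- `I` is a strongly stable monomial ideal: for every monomial `m ∈ I`, every `x_i`
dividing `m` and every `j < i`, one has `m·x_j/x_i ∈ I`. -/
def IsStronglyStable {K : Type*} [Field K] {n : ℕ}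
    (I : Ideal (MvPolynomial (Fin n) K)) : Prop :=
  ∀ (s : Fin n →₀ ℕ) (i j : Fin n), monomial s (1 : K) ∈ I →
    s i ≠ 0 → j < i →
    monomial (s + single j 1 - single i 1) (1 : K) ∈ I

/-- The (strict) co-lexicographic order on exponent vectors of monomials of degree `d`:
`s ≺ t` iff there is `k` with `s k < t k` and `s l = t l` for all `l > k`. -/
def ColexLT {n : ℕ} (s t : Fin n →₀ ℕ) : Prop :=
  ∃ k : Fin n, s k < t k ∧ ∀ l, k < l → s l = t l

lemma mem_monomialIdeal_iff (K : Type*) [Field K] {n : ℕ} (S : Finset (Fin n →₀ ℕ))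
    (s : Fin n →₀ ℕ) :
    monomial s (1 : K) ∈ monomialIdeal K S ↔ ∃ t ∈ S, t ≤ s := by
  unfold monomialIdeal
  rw [mem_ideal_span_monomial_image]
  simp [support_monomial]

lemma colex_asymm {n : ℕ} {s t : Fin n →₀ ℕ} (h1 : ColexLT s t) (h2 : ColexLT t s) : False := by
  obtain ⟨k1, hk1, he1⟩ := h1
  obtain ⟨k2, hk2, he2⟩ := h2
  rcases lt_trichotomy k1 k2 with h | h | h
  · have := he1 k2 h; omega
  · subst h; omega
  · have := he2 k1 h; omega

lemma sum_eq_of_le {n d : ℕ} {t g : Fin n →₀ ℕ} (hle : t ≤ g)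
    (ht : (t.sum fun _ e => e) = d) (hg : (g.sum fun _ e => e) = d) : t = g := by
  have h := add_tsub_cancel_of_le hle
  have hsum : ((t + (g - t)).sum fun _ e => e) =
      (t.sum fun _ e => e) + ((g - t).sum fun _ e => e) :=
    Finsupp.sum_add_index' (fun _ => rfl) (fun _ _ _ => rfl)
  rw [h, hg, ht] at hsum
  have hz : ((g - t).sum fun _ e => e) = 0 := by omega
  have : g - t = 0 := by
    ext a
    by_contra hc
    have ha : a ∈ (g - t).support := Finsupp.mem_support_iff.mpr hc
    have := Finset.sum_eq_zero_iff.mp hz a ha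
    exact hc this
  rw [← h, this, add_zero]

/-- Key lemma: a stable-type move (give from index `p`, receive at index `q < p`)
on a monomial in the erased ideal stays in the erased ideal. -/
lemma key {K : Type*} [Field K] {n d : ℕ}
    (S : Finset (Fin n →₀ ℕ)) (hdeg : ∀ s ∈ S, (s.sum fun _ e => e) = d)
    (f : Fin n →₀ ℕ) (hmax : ∀ g ∈ S, g ≠ f → ColexLT g f)
    (s : Fin n →₀ ℕ) (p q : Fin n) (hqp : q < p)
    (hmem : monomial s (1 : K) ∈ monomialIdeal K (S.erase f))
    (hmove : ∀ t ∈ S, t ≤ s → t p ≠ 0 →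
      monomial (t + single q 1 - single p 1) (1 : K) ∈ monomialIdeal K S) :
    monomial (s + single q 1 - single p 1) (1 : K) ∈ monomialIdeal K (S.erase f) := by
  rw [mem_monomialIdeal_iff] at hmem ⊢
  obtain ⟨t, htS, hts⟩ := hmem
  rw [Finset.mem_erase] at htS
  obtain ⟨htf, htS⟩ := htS
  have hle : ∀ a, t a ≤ s a := Finsupp.le_def.mp hts
  by_cases htp : t p = 0
  · refine ⟨t, Finset.mem_erase.mpr ⟨htf, htS⟩, Finsupp.le_def.mpr fun a => ?_⟩
    have h1 := hle a
    rcases eq_or_ne a p with rfl | hap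
    · simp [htp]
    · have hp : (single p (1 : ℕ)) a = 0 := Finsupp.single_eq_of_ne' (Ne.symm hap)
      simp only [Finsupp.tsub_apply, Finsupp.add_apply, hp]
      omega
  · have h1 := hmove t htS hts htp
    rw [mem_monomialIdeal_iff] at h1
    obtain ⟨v, hvS, hvt⟩ := h1
    set t1 := t + single q 1 - single p 1 with ht1
    have happ : ∀ a, t1 a = t a + (single q (1:ℕ)) a - (single p (1:ℕ)) a := by
      intro a
      simp [ht1, Finsupp.tsub_apply]
    have hc : t1 + single p 1 = t + single q 1 := by
      ext a
      have h2 := happ a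
      rcases eq_or_ne a p with rfl | hap
      · have hq : (single q (1:ℕ)) a = 0 := Finsupp.single_eq_of_ne' (ne_of_lt hqp)
        simp only [Finsupp.add_apply, Finsupp.single_eq_same] at *
        omega
      · have hp : (single p (1:ℕ)) a = 0 := Finsupp.single_eq_of_ne' (Ne.symm hap)
        simp only [Finsupp.add_apply, hp] at *
        omega
    have hsum1 : (t1.sum fun _ e => e) = d := by
      have e1 : ((t1 + single p 1).sum fun _ e => e) =
          (t1.sum fun _ e => e) + ((single p (1:ℕ)).sum fun _ e => e) :=
        Finsupp.sum_add_index' (fun _ => rfl) (fun _ _ _ => rfl)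
      have e2 : ((t + single q 1).sum fun _ e => e) =
          (t.sum fun _ e => e) + ((single q (1:ℕ)).sum fun _ e => e) :=
        Finsupp.sum_add_index' (fun _ => rfl) (fun _ _ _ => rfl)
      rw [hc, e2] at e1
      have hsp : ((single p (1:ℕ)).sum fun _ e => e) = 1 := by
        rw [Finsupp.sum_single_index rfl]
      have hsq : ((single q (1:ℕ)).sum fun _ e => e) = 1 := by
        rw [Finsupp.sum_single_index rfl]
      have := hdeg t htS
      omega
    have hv : v = t1 := sum_eq_of_le hvt (hdeg v hvS) hsum1
    subst hv
    have ht1f : t1 ≠ f := by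
      intro h
      apply colex_asymm (hmax t htS htf)
      rw [← h]
      refine ⟨p, ?_, fun l hl => ?_⟩
      · have := happ p
        have hq : (single q (1:ℕ)) p = 0 := Finsupp.single_eq_of_ne' (ne_of_lt hqp)
        simp only [hq, Finsupp.single_eq_same] at this
        omega
      · have := happ l
        have hq : (single q (1:ℕ)) l = 0 :=
          Finsupp.single_eq_of_ne' (ne_of_lt (hqp.trans hl))
        have hp : (single p (1:ℕ)) l = 0 := Finsupp.single_eq_of_ne' (ne_of_lt hl)
        simp only [hq, hp] at this
        omega
    refine ⟨t1, Finset.mem_erase.mpr ⟨ht1f, hvS⟩, Finsupp.le_def.mpr fun a => ?_⟩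
    have h2 := happ a
    have h3 : ((s + single q 1 - single p 1 : Fin n →₀ ℕ)) a
        = s a + (single q (1:ℕ)) a - (single p (1:ℕ)) a := by
      simp [Finsupp.tsub_apply]
    have h4 := hle a
    omega

theorem erase_max_stable (K : Type*) [Field K] {n d : ℕ}
    (S : Finset (Fin n →₀ ℕ)) (hdeg : ∀ s ∈ S, (s.sum fun _ e => e) = d)
    (f : Fin n →₀ ℕ) (hf : f ∈ S) (hmax : ∀ g ∈ S, g ≠ f → ColexLT g f) :
    (IsStable (monomialIdeal K S) → IsStable (monomialIdeal K (S.erase f))) ∧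
    (IsStronglyStable (monomialIdeal K S) →
      IsStronglyStable (monomialIdeal K (S.erase f))) := by
  constructor
  · intro hI s i j hm hsj hjmax hij
    refine key S hdeg f hmax s j i hij hm ?_
    intro t htS hts htp
    refine hI t i j ?_ htp ?_ hij
    · exact (mem_monomialIdeal_iff K S t).mpr ⟨t, htS, le_refl t⟩
    · intro k hk
      have := Finsupp.le_def.mp hts k
      have := hjmax k hk
      omega
  · intro hI s i j hm hsi hji
    refine key S hdeg f hmax s i j hji hm ?_
    intro t htS hts htp
    exact hI t i j ((mem_monomialIdeal_iff K S t).mpr ⟨t, htS, le_refl t⟩) htp hji
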